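/- There exists a constant C > 0 such that for every integer n ≥ 2, ∑ over 7-tuples of positive integers (x₁,...,x₇) with x₁+x₂+x₃+x₄ = n, x₄+x₅ = x₆+x₇, and x₅ < x₄, of ∏_{i=1}^{7} x_i^(-5/7) ≤ C. -/

import Mathlib

open Finset

lemma psum {s : ℝ} (hs0 : 0 < s) (hs1 : s < 1) (m : ℕ) :
    ∑ a ∈ Finset.Icc 1 m, (a : ℝ) ^ (-s) ≤ (1 - s)⁻¹ * (m : ℝ) ^ (1 - s) := by
  induction m with
  | zero =>
    have h0 : (0:ℝ) ≤ (1-s)⁻¹ := by rw [inv_nonneg]; linarith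
    rw [Finset.Icc_eq_empty (by omega), Finset.sum_empty]
    exact mul_nonneg h0 (Real.rpow_nonneg (by norm_num) _)
  | succ m ih =>
    rw [Finset.sum_Icc_succ_top (by omega)]
    have hM : (1:ℝ) ≤ (m:ℝ) + 1 := by have := Nat.cast_nonneg (α := ℝ) m; linarith
    have hM0 : (0:ℝ) < (m:ℝ) + 1 := by positivity
    have hbern : (1 + (-(1/((m:ℝ)+1)))) ^ (1-s) ≤ 1 + (1-s) * (-(1/((m:ℝ)+1))) := by
      apply rpow_one_add_le_one_add_mul_self _ (by linarith) (by linarith)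
      have : 1/((m:ℝ)+1) ≤ 1 := by
        rw [div_le_one hM0]; linarith
      linarith
    have hmm : (m:ℝ) = ((m:ℝ)+1) * (1 + (-(1/((m:ℝ)+1)))) := by field_simp; ring
    have hx : (0:ℝ) ≤ 1 + (-(1/((m:ℝ)+1))) := by
      have : 1/((m:ℝ)+1) ≤ 1 := by rw [div_le_one hM0]; linarith
      linarith
    have key : (m:ℝ) ^ (1-s) ≤ ((m:ℝ)+1) ^ (1-s) - (1-s) * ((m:ℝ)+1) ^ (-s) := by
      have h1 : (m:ℝ) ^ (1-s) = ((m:ℝ)+1) ^ (1-s) * (1 + (-(1/((m:ℝ)+1)))) ^ (1-s) := by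
        rw [← Real.mul_rpow (by positivity) hx, ← hmm]
      have h2 : ((m:ℝ)+1) ^ (1-s) * (1 + (-(1/((m:ℝ)+1)))) ^ (1-s)
          ≤ ((m:ℝ)+1) ^ (1-s) * (1 + (1-s) * (-(1/((m:ℝ)+1)))) :=
        mul_le_mul_of_nonneg_left hbern (by positivity)
      have h3 : ((m:ℝ)+1) ^ (1-s) * (1/((m:ℝ)+1)) = ((m:ℝ)+1) ^ (-s) := by
        rw [one_div, ← Real.rpow_neg_one ((m:ℝ)+1), ← Real.rpow_add hM0]
        congr 1; ring
      calc (m:ℝ) ^ (1-s) ≤ ((m:ℝ)+1) ^ (1-s) * (1 + (1-s) * (-(1/((m:ℝ)+1)))) := by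
            rw [h1] at *; exact h2
        _ = ((m:ℝ)+1) ^ (1-s) - (1-s) * (((m:ℝ)+1) ^ (1-s) * (1/((m:ℝ)+1))) := by ring
        _ = ((m:ℝ)+1) ^ (1-s) - (1-s) * ((m:ℝ)+1) ^ (-s) := by rw [h3]
    have hs' : (0:ℝ) < 1 - s := by linarith
    have key2 : ((m:ℝ)+1) ^ (-s) + (1-s)⁻¹ * (m:ℝ) ^ (1-s) ≤ (1-s)⁻¹ * ((m:ℝ)+1) ^ (1-s) := by
      have h5 := mul_le_mul_of_nonneg_left key (le_of_lt (inv_pos.mpr hs'))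
      have h4 : (1-s)⁻¹ * (1-s) = 1 := inv_mul_cancel₀ (ne_of_gt hs')
      have h6 : (1-s)⁻¹ * (((m:ℝ)+1)^(1-s) - (1-s)*((m:ℝ)+1)^(-s))
          = (1-s)⁻¹ * ((m:ℝ)+1)^(1-s) - ((1-s)⁻¹*(1-s)) * ((m:ℝ)+1)^(-s) := by ring
      rw [h6, h4] at h5
      linarith
    push_cast
    linarith [key2, ih]

lemma conv {s t : ℝ} (hs0 : 0 < s) (hs1 : s < 1) (ht0 : 0 < t) (ht1 : t < 1) (m : ℕ) :
    ∑ a ∈ Finset.Ioo 0 m, (a : ℝ) ^ (-s) * ((m - a : ℕ) : ℝ) ^ (-t)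
      ≤ (2 * (1 - s)⁻¹ + 2 * (1 - t)⁻¹) * (m : ℝ) ^ (1 - s - t) := by
  rcases Nat.eq_zero_or_pos m with rfl | hm
  · rw [show Finset.Ioo 0 0 = ∅ from rfl, Finset.sum_empty]
    have h1 : (0:ℝ) ≤ (1-s)⁻¹ := by rw [inv_nonneg]; linarith
    have h2 : (0:ℝ) ≤ (1-t)⁻¹ := by rw [inv_nonneg]; linarith
    have := Real.rpow_nonneg (le_refl (0:ℝ)) (1-s-t)
    push_cast
    nlinarith [this]
  have hm0 : (0:ℝ) < (m:ℝ) := by exact_mod_cast hm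
  -- pointwise bound
  have hpt : ∀ a ∈ Finset.Ioo 0 m, (a : ℝ) ^ (-s) * ((m - a : ℕ) : ℝ) ^ (-t)
      ≤ (a : ℝ) ^ (-s) * (2 * (m:ℝ) ^ (-t)) + (2 * (m:ℝ) ^ (-s)) * ((m - a : ℕ) : ℝ) ^ (-t) := by
    intro a ha
    rw [Finset.mem_Ioo] at ha
    have ha0 : (0:ℝ) < (a:ℝ) := by exact_mod_cast ha.1
    have hma : 0 < m - a := by omega
    have hma0 : (0:ℝ) < ((m - a : ℕ):ℝ) := by exact_mod_cast hma
    have half : ∀ x : ℕ, (m:ℝ)/2 ≤ (x:ℝ) → 0 < x → ∀ u : ℝ, 0 < u → u < 1 →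
        (x:ℝ) ^ (-u) ≤ 2 * (m:ℝ) ^ (-u) := by
      intro x hx hx0 u hu0 hu1
      have h2m : (0:ℝ) < (m:ℝ)/2 := by linarith
      have : (x:ℝ) ^ (-u) ≤ ((m:ℝ)/2) ^ (-u) :=
        Real.rpow_le_rpow_of_nonpos h2m hx (by linarith)
      have hdiv : ((m:ℝ)/2) ^ (-u) = (m:ℝ)^(-u) / (2:ℝ)^(-u) :=
        Real.div_rpow (le_of_lt hm0) (by norm_num) (-u)
      have h2u : ((2:ℝ))^(-u) = ((2:ℝ)^u)⁻¹ := Real.rpow_neg (by norm_num) u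
      have h2l : (1:ℝ) ≤ (2:ℝ)^u := Real.one_le_rpow (by norm_num) (le_of_lt hu0)
      have h2le : ((2:ℝ))^u ≤ 2 := by
        calc ((2:ℝ))^u ≤ (2:ℝ)^(1:ℝ) := Real.rpow_le_rpow_of_exponent_le (by norm_num) (le_of_lt hu1)
          _ = 2 := Real.rpow_one 2
      have hmu : (0:ℝ) ≤ (m:ℝ)^(-u) := Real.rpow_nonneg (le_of_lt hm0) _
      calc (x:ℝ) ^ (-u) ≤ ((m:ℝ)/2) ^ (-u) := this
        _ = (m:ℝ)^(-u) * (2:ℝ)^u := by rw [hdiv, h2u]; field_simp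
        _ ≤ (m:ℝ)^(-u) * 2 := mul_le_mul_of_nonneg_left h2le hmu
        _ = 2 * (m:ℝ)^(-u) := by ring
    have hnn1 : (0:ℝ) ≤ (a:ℝ)^(-s) := Real.rpow_nonneg (le_of_lt ha0) _
    have hnn2 : (0:ℝ) ≤ ((m-a:ℕ):ℝ)^(-t) := Real.rpow_nonneg (le_of_lt hma0) _
    have hnn3 : (0:ℝ) ≤ (m:ℝ)^(-s) := Real.rpow_nonneg (le_of_lt hm0) _
    have hnn4 : (0:ℝ) ≤ (m:ℝ)^(-t) := Real.rpow_nonneg (le_of_lt hm0) _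
    rcases le_or_gt (2*a) m with hc | hc
    · have hge : (m:ℝ)/2 ≤ ((m-a:ℕ):ℝ) := by
        have : (((m - a:ℕ)):ℝ) = (m:ℝ) - (a:ℝ) := by
          push_cast [Nat.cast_sub (by omega : a ≤ m)]; ring
        rw [this]
        have : 2*(a:ℝ) ≤ (m:ℝ) := by exact_mod_cast hc
        linarith
      have := half (m-a) hge hma t ht0 ht1
      nlinarith [mul_le_mul_of_nonneg_left this hnn1]
    · have hge : (m:ℝ)/2 ≤ (a:ℝ) := by
        have : (m:ℝ) < 2*(a:ℝ) := by exact_mod_cast hc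
        linarith
      have := half a hge ha.1 s hs0 hs1
      nlinarith [mul_le_mul_of_nonneg_right this hnn2]
  calc ∑ a ∈ Finset.Ioo 0 m, (a : ℝ) ^ (-s) * ((m - a : ℕ) : ℝ) ^ (-t)
      ≤ ∑ a ∈ Finset.Ioo 0 m, ((a : ℝ) ^ (-s) * (2 * (m:ℝ) ^ (-t)) + (2 * (m:ℝ) ^ (-s)) * ((m - a : ℕ) : ℝ) ^ (-t)) :=
        Finset.sum_le_sum hpt
    _ = (∑ a ∈ Finset.Ioo 0 m, (a:ℝ)^(-s)) * (2 * (m:ℝ) ^ (-t))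
        + (2 * (m:ℝ) ^ (-s)) * (∑ a ∈ Finset.Ioo 0 m, ((m - a : ℕ) : ℝ) ^ (-t)) := by
        rw [Finset.sum_add_distrib, ← Finset.sum_mul, ← Finset.mul_sum]
    _ ≤ ((1-s)⁻¹ * (m:ℝ)^(1-s)) * (2 * (m:ℝ) ^ (-t))
        + (2 * (m:ℝ) ^ (-s)) * ((1-t)⁻¹ * (m:ℝ)^(1-t)) := by
        have e1 : ∑ a ∈ Finset.Ioo 0 m, (a:ℝ)^(-s) ≤ (1-s)⁻¹ * (m:ℝ)^(1-s) := by
          refine le_trans (Finset.sum_le_sum_of_subset_of_nonneg ?_ ?_) (psum hs0 hs1 m)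
          · intro x hx; rw [Finset.mem_Ioo] at hx; rw [Finset.mem_Icc]; omega
          · intro x _ _; exact Real.rpow_nonneg (Nat.cast_nonneg x) _
        have e2 : ∑ a ∈ Finset.Ioo 0 m, ((m - a : ℕ) : ℝ) ^ (-t) ≤ (1-t)⁻¹ * (m:ℝ)^(1-t) := by
          have e3 : ∑ a ∈ Finset.Ioo 0 m, ((m - a : ℕ) : ℝ) ^ (-t)
              = ∑ a ∈ Finset.Ioo 0 m, (a : ℝ) ^ (-t) := by
            apply Finset.sum_nbij' (fun a => m - a) (fun a => m - a)
            · intro a ha; rw [Finset.mem_Ioo] at *; omega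
            · intro a ha; rw [Finset.mem_Ioo] at *; omega
            · intro a ha; rw [Finset.mem_Ioo] at ha; omega
            · intro a ha; rw [Finset.mem_Ioo] at ha; omega
            · intro a _; rfl
          rw [e3]
          refine le_trans (Finset.sum_le_sum_of_subset_of_nonneg ?_ ?_) (psum ht0 ht1 m)
          · intro x hx; rw [Finset.mem_Ioo] at hx; rw [Finset.mem_Icc]; omega
          · intro x _ _; exact Real.rpow_nonneg (Nat.cast_nonneg x) _
        have p1 : (0:ℝ) ≤ 2 * (m:ℝ)^(-t) := by positivity
        have p2 : (0:ℝ) ≤ 2 * (m:ℝ)^(-s) := by positivity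
        exact add_le_add (mul_le_mul_of_nonneg_right e1 p1) (mul_le_mul_of_nonneg_left e2 p2)
    _ = (2 * (1 - s)⁻¹ + 2 * (1 - t)⁻¹) * (m : ℝ) ^ (1 - s - t) := by
        have e1 : (m:ℝ)^(1-s) * (m:ℝ)^(-t) = (m:ℝ)^(1-s-t) := by
          rw [← Real.rpow_add hm0]; congr 1 <;> ring
        have e2 : (m:ℝ)^(-s) * (m:ℝ)^(1-t) = (m:ℝ)^(1-s-t) := by
          rw [← Real.rpow_add hm0]; congr 1 <;> ring
        linear_combination (2*(1-s)⁻¹) * e1 + (2*(1-t)⁻¹) * e2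

noncomputable def gg (a : ℕ) : ℝ := (a : ℝ) ^ (-5/7 : ℝ)

lemma gg_eq (a : ℕ) : gg a = (a : ℝ) ^ (-(5/7) : ℝ) := by norm_num [gg]

lemma gg_nonneg (a : ℕ) : 0 ≤ gg a := Real.rpow_nonneg (Nat.cast_nonneg a) _

lemma L1 (m : ℕ) : ∑ x ∈ Finset.Ioo 0 m, gg x * gg (m - x) ≤ 14 * (m : ℝ) ^ (-(3/7) : ℝ) := by
  have h := conv (s := 5/7) (t := 5/7) (by norm_num) (by norm_num) (by norm_num) (by norm_num) m
  have e : ∀ x, gg x * gg (m-x) = (x:ℝ)^(-(5/7):ℝ) * ((m-x:ℕ):ℝ)^(-(5/7):ℝ) := by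
    intro x; rw [gg_eq, gg_eq]
  rw [Finset.sum_congr rfl (fun x _ => e x)]
  calc _ ≤ (2 * (1 - 5/7)⁻¹ + 2 * (1 - 5/7)⁻¹) * (m : ℝ) ^ (1 - 5/7 - 5/7 : ℝ) := h
    _ = 14 * (m : ℝ) ^ (-(3/7) : ℝ) := by norm_num

lemma L2 (x4 : ℕ) (hx4 : 0 < x4) :
    ∑ x5 ∈ Finset.Ioo 0 x4, gg x5 * ((x4 + x5 : ℕ) : ℝ) ^ (-(3/7) : ℝ)
      ≤ (7/2) * (x4 : ℝ) ^ (-(1/7) : ℝ) := by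
  have hx40 : (0:ℝ) < (x4:ℝ) := by exact_mod_cast hx4
  have step1 : ∀ x5 ∈ Finset.Ioo 0 x4, gg x5 * ((x4 + x5 : ℕ) : ℝ) ^ (-(3/7) : ℝ)
      ≤ gg x5 * (x4 : ℝ) ^ (-(3/7) : ℝ) := by
    intro x5 hx5
    apply mul_le_mul_of_nonneg_left _ (gg_nonneg x5)
    apply Real.rpow_le_rpow_of_nonpos hx40 _ (by norm_num)
    exact_mod_cast Nat.le_add_right x4 x5
  calc ∑ x5 ∈ Finset.Ioo 0 x4, gg x5 * ((x4 + x5 : ℕ) : ℝ) ^ (-(3/7) : ℝ)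
      ≤ ∑ x5 ∈ Finset.Ioo 0 x4, gg x5 * (x4 : ℝ) ^ (-(3/7) : ℝ) := Finset.sum_le_sum step1
    _ = (∑ x5 ∈ Finset.Ioo 0 x4, gg x5) * (x4 : ℝ) ^ (-(3/7) : ℝ) := by rw [Finset.sum_mul]
    _ ≤ ((1 - 5/7)⁻¹ * (x4:ℝ)^(1 - 5/7 : ℝ)) * (x4 : ℝ) ^ (-(3/7) : ℝ) := by
        apply mul_le_mul_of_nonneg_right _ (Real.rpow_nonneg (le_of_lt hx40) _)
        calc ∑ x5 ∈ Finset.Ioo 0 x4, gg x5 ≤ ∑ x5 ∈ Finset.Icc 1 x4, gg x5 :=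
            Finset.sum_le_sum_of_subset_of_nonneg
              (fun x hx => by rw [Finset.mem_Ioo] at hx; rw [Finset.mem_Icc]; omega)
              (fun x _ _ => gg_nonneg x)
          _ = ∑ x ∈ Finset.Icc 1 x4, (x:ℝ)^(-(5/7):ℝ) :=
              Finset.sum_congr rfl (fun x _ => gg_eq x)
          _ ≤ (1 - 5/7)⁻¹ * (x4:ℝ)^(1 - 5/7 : ℝ) := psum (by norm_num) (by norm_num) x4
    _ = (7/2) * (x4 : ℝ) ^ (-(1/7) : ℝ) := by
        rw [mul_assoc, ← Real.rpow_add hx40]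
        norm_num

lemma L3 (l : ℕ) : ∑ x3 ∈ Finset.Ioo 0 l, gg x3 * ((l - x3 : ℕ) : ℝ) ^ (-(6/7) : ℝ)
    ≤ 21 * (l : ℝ) ^ (-(4/7) : ℝ) := by
  have h := conv (s := 5/7) (t := 6/7) (by norm_num) (by norm_num) (by norm_num) (by norm_num) l
  rw [Finset.sum_congr rfl (fun x (_ : x ∈ Finset.Ioo 0 l) => by rw [gg_eq])]
  calc _ ≤ (2 * (1 - 5/7)⁻¹ + 2 * (1 - 6/7)⁻¹) * (l : ℝ) ^ (1 - 5/7 - 6/7 : ℝ) := h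
    _ = 21 * (l : ℝ) ^ (-(4/7) : ℝ) := by norm_num

lemma L4 (n : ℕ) (hn : 0 < n) :
    ∑ k ∈ Finset.Ioo 0 n, (k : ℝ) ^ (-(3/7) : ℝ) * ((n - k : ℕ) : ℝ) ^ (-(4/7) : ℝ) ≤ 9 := by
  have h := conv (s := 3/7) (t := 4/7) (by norm_num) (by norm_num) (by norm_num) (by norm_num) n
  have hn0 : (0:ℝ) < (n:ℝ) := by exact_mod_cast hn
  calc _ ≤ (2 * (1 - 3/7)⁻¹ + 2 * (1 - 4/7)⁻¹) * (n : ℝ) ^ (1 - 3/7 - 4/7 : ℝ) := h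
    _ = (49/6) * (n:ℝ) ^ (0:ℝ) := by norm_num
    _ ≤ 9 := by rw [Real.rpow_zero]; norm_num

lemma B5 (x4 : ℕ) (h : 0 < x4) :
    ∑ x5 ∈ Finset.Ioo 0 x4, gg x5 * ∑ x6 ∈ Finset.Ioo 0 (x4 + x5), gg x6 * gg ((x4 + x5) - x6)
      ≤ 49 * (x4 : ℝ) ^ (-(1/7) : ℝ) := by
  calc ∑ x5 ∈ Finset.Ioo 0 x4, gg x5 * ∑ x6 ∈ Finset.Ioo 0 (x4 + x5), gg x6 * gg ((x4 + x5) - x6)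
      ≤ ∑ x5 ∈ Finset.Ioo 0 x4, gg x5 * (14 * ((x4 + x5 : ℕ) : ℝ) ^ (-(3/7) : ℝ)) := by
        refine Finset.sum_le_sum (fun x5 _ => ?_)
        exact mul_le_mul_of_nonneg_left (L1 (x4 + x5)) (gg_nonneg x5)
    _ = 14 * ∑ x5 ∈ Finset.Ioo 0 x4, gg x5 * ((x4 + x5 : ℕ) : ℝ) ^ (-(3/7) : ℝ) := by
        rw [Finset.mul_sum]; exact Finset.sum_congr rfl (fun x _ => by ring)
    _ ≤ 14 * ((7/2) * (x4 : ℝ) ^ (-(1/7) : ℝ)) :=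
        mul_le_mul_of_nonneg_left (L2 x4 h) (by norm_num)
    _ = 49 * (x4 : ℝ) ^ (-(1/7) : ℝ) := by ring

lemma B4 (x4 : ℕ) (h : 0 < x4) :
    gg x4 * ∑ x5 ∈ Finset.Ioo 0 x4, gg x5 * ∑ x6 ∈ Finset.Ioo 0 (x4 + x5), gg x6 * gg ((x4 + x5) - x6)
      ≤ 49 * (x4 : ℝ) ^ (-(6/7) : ℝ) := by
  have hx40 : (0:ℝ) < (x4:ℝ) := by exact_mod_cast h
  calc gg x4 * ∑ x5 ∈ Finset.Ioo 0 x4, gg x5 * ∑ x6 ∈ Finset.Ioo 0 (x4 + x5), gg x6 * gg ((x4 + x5) - x6)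
      ≤ gg x4 * (49 * (x4 : ℝ) ^ (-(1/7) : ℝ)) :=
        mul_le_mul_of_nonneg_left (B5 x4 h) (gg_nonneg x4)
    _ = 49 * ((x4:ℝ) ^ (-(5/7) : ℝ) * (x4:ℝ) ^ (-(1/7) : ℝ)) := by rw [gg_eq]; ring
    _ = 49 * (x4 : ℝ) ^ (-(6/7) : ℝ) := by
        rw [← Real.rpow_add hx40]; norm_num

lemma B3 (l : ℕ) :
    ∑ x3 ∈ Finset.Ioo 0 l, gg x3 * (gg (l - x3) *
      ∑ x5 ∈ Finset.Ioo 0 (l - x3), gg x5 *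
        ∑ x6 ∈ Finset.Ioo 0 ((l - x3) + x5), gg x6 * gg (((l - x3) + x5) - x6))
      ≤ 1029 * (l : ℝ) ^ (-(4/7) : ℝ) := by
  calc ∑ x3 ∈ Finset.Ioo 0 l, gg x3 * (gg (l - x3) *
      ∑ x5 ∈ Finset.Ioo 0 (l - x3), gg x5 *
        ∑ x6 ∈ Finset.Ioo 0 ((l - x3) + x5), gg x6 * gg (((l - x3) + x5) - x6))
      ≤ ∑ x3 ∈ Finset.Ioo 0 l, gg x3 * (49 * ((l - x3 : ℕ) : ℝ) ^ (-(6/7) : ℝ)) := by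
        refine Finset.sum_le_sum (fun x3 hx3 => ?_)
        rw [Finset.mem_Ioo] at hx3
        exact mul_le_mul_of_nonneg_left (B4 (l - x3) (by omega)) (gg_nonneg x3)
    _ = 49 * ∑ x3 ∈ Finset.Ioo 0 l, gg x3 * ((l - x3 : ℕ) : ℝ) ^ (-(6/7) : ℝ) := by
        rw [Finset.mul_sum]; exact Finset.sum_congr rfl (fun x _ => by ring)
    _ ≤ 49 * (21 * (l : ℝ) ^ (-(4/7) : ℝ)) := mul_le_mul_of_nonneg_left (L3 l) (by norm_num)
    _ = 1029 * (l : ℝ) ^ (-(4/7) : ℝ) := by ring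

abbrev Tup : Type := Σ _ : ℕ, Σ _ : ℕ, Σ _ : ℕ, Σ _ : ℕ, ℕ

def WW (n : ℕ) : Finset Tup :=
  (Finset.Ioo 0 n).sigma fun k =>
    (Finset.Ioo 0 k).sigma fun _ =>
      (Finset.Ioo 0 (n - k)).sigma fun x3 =>
        (Finset.Ioo 0 ((n - k) - x3)).sigma fun x5 =>
          Finset.Ioo 0 (((n - k) - x3) + x5)

noncomputable def FF (n : ℕ) (w : Tup) : ℝ :=
  (gg w.2.1 * gg (w.1 - w.2.1)) * (gg w.2.2.1 * (gg ((n - w.1) - w.2.2.1) *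
    (gg w.2.2.2.1 * (gg w.2.2.2.2 * gg ((((n - w.1) - w.2.2.1) + w.2.2.2.1) - w.2.2.2.2)))))

lemma master (n : ℕ) (hn : 0 < n) : ∑ w ∈ WW n, FF n w ≤ 130000 := by
  rw [WW]
  simp only [Finset.sum_sigma, FF]
  have flat : ∀ k ∈ Finset.Ioo 0 n,
      (∑ x1 ∈ Finset.Ioo 0 k, ∑ x3 ∈ Finset.Ioo 0 (n - k), ∑ x5 ∈ Finset.Ioo 0 ((n - k) - x3),
        ∑ x6 ∈ Finset.Ioo 0 (((n - k) - x3) + x5),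
          (gg x1 * gg (k - x1)) * (gg x3 * (gg ((n - k) - x3) *
            (gg x5 * (gg x6 * gg ((((n - k) - x3) + x5) - x6))))))
      ≤ (14 * (k : ℝ) ^ (-(3/7) : ℝ)) * (1029 * ((n - k : ℕ) : ℝ) ^ (-(4/7) : ℝ)) := by
    intro k hk
    have eq1 : (∑ x1 ∈ Finset.Ioo 0 k, ∑ x3 ∈ Finset.Ioo 0 (n - k), ∑ x5 ∈ Finset.Ioo 0 ((n - k) - x3),
        ∑ x6 ∈ Finset.Ioo 0 (((n - k) - x3) + x5),
          (gg x1 * gg (k - x1)) * (gg x3 * (gg ((n - k) - x3) *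
            (gg x5 * (gg x6 * gg ((((n - k) - x3) + x5) - x6))))))
        = (∑ x1 ∈ Finset.Ioo 0 k, gg x1 * gg (k - x1)) *
          (∑ x3 ∈ Finset.Ioo 0 (n - k), gg x3 * (gg ((n - k) - x3) *
            ∑ x5 ∈ Finset.Ioo 0 ((n - k) - x3), gg x5 *
              ∑ x6 ∈ Finset.Ioo 0 (((n - k) - x3) + x5), gg x6 * gg ((((n - k) - x3) + x5) - x6))) := by
      simp only [← Finset.mul_sum]
      rw [← Finset.sum_mul]
    rw [eq1]
    have hnn3 : 0 ≤ ∑ x3 ∈ Finset.Ioo 0 (n - k), gg x3 * (gg ((n - k) - x3) *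
        ∑ x5 ∈ Finset.Ioo 0 ((n - k) - x3), gg x5 *
          ∑ x6 ∈ Finset.Ioo 0 (((n - k) - x3) + x5), gg x6 * gg ((((n - k) - x3) + x5) - x6)) := by
      refine Finset.sum_nonneg (fun x3 _ => mul_nonneg (gg_nonneg _) (mul_nonneg (gg_nonneg _) ?_))
      refine Finset.sum_nonneg (fun x5 _ => mul_nonneg (gg_nonneg _) ?_)
      exact Finset.sum_nonneg (fun x6 _ => mul_nonneg (gg_nonneg _) (gg_nonneg _))
    have h14 : (0:ℝ) ≤ 14 * (k : ℝ) ^ (-(3/7) : ℝ) := by positivity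
    exact mul_le_mul (L1 k) (B3 (n - k)) hnn3 h14
  calc _ ≤ ∑ k ∈ Finset.Ioo 0 n,
      (14 * (k : ℝ) ^ (-(3/7) : ℝ)) * (1029 * ((n - k : ℕ) : ℝ) ^ (-(4/7) : ℝ)) :=
        Finset.sum_le_sum flat
    _ = 14406 * ∑ k ∈ Finset.Ioo 0 n, (k : ℝ) ^ (-(3/7) : ℝ) * ((n - k : ℕ) : ℝ) ^ (-(4/7) : ℝ) := by
        rw [Finset.mul_sum]; exact Finset.sum_congr rfl (fun x _ => by ring)
    _ ≤ 14406 * 9 := mul_le_mul_of_nonneg_left (L4 n hn) (by norm_num)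
    _ ≤ 130000 := by norm_num

lemma FF_nonneg (n : ℕ) (w : Tup) : 0 ≤ FF n w := by
  unfold FF gg; positivity

theorem stmt8 :
    ∃ C : ℝ, 0 < C ∧ ∀ n : ℕ, 2 ≤ n →
      (∑' p : {p : Fin 7 → ℕ // (∀ i, 0 < p i) ∧ p 0 + p 1 + p 2 + p 3 = n ∧
          p 3 + p 4 = p 5 + p 6 ∧ p 4 < p 3},
        ∏ i, ((p : Fin 7 → ℕ) i : ℝ) ^ (-5/7 : ℝ)) ≤ C := by
  classical
  refine ⟨130000, by norm_num, fun n hn => ?_⟩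
  apply tsum_le_of_sum_le' (by norm_num)
  intro F
  set φ : {p : Fin 7 → ℕ // (∀ i, 0 < p i) ∧ p 0 + p 1 + p 2 + p 3 = n ∧
      p 3 + p 4 = p 5 + p 6 ∧ p 4 < p 3} → Tup :=
    fun p => ⟨p.1 0 + p.1 1, p.1 0, p.1 2, p.1 4, p.1 5⟩ with hφ
  have key : ∀ p : {p : Fin 7 → ℕ // (∀ i, 0 < p i) ∧ p 0 + p 1 + p 2 + p 3 = n ∧
      p 3 + p 4 = p 5 + p 6 ∧ p 4 < p 3},
      (∏ i, ((p : Fin 7 → ℕ) i : ℝ) ^ (-5/7 : ℝ)) = FF n (φ p) := by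
    rintro ⟨q, hpos, hsum, heqn, hlt⟩
    have h0 := hpos 0; have h1 := hpos 1; have h2 := hpos 2; have h3 := hpos 3
    have h4 := hpos 4; have h5 := hpos 5; have h6 := hpos 6
    simp only [hφ, FF]
    have e1 : q 0 + q 1 - q 0 = q 1 := by omega
    have e2 : n - (q 0 + q 1) - q 2 = q 3 := by omega
    rw [e1, e2]
    have e3 : q 3 + q 4 - q 5 = q 6 := by omega
    rw [e3, Fin.prod_univ_seven]
    simp only [gg]
    ring
  have hinj : ∀ x ∈ F, ∀ y ∈ F, φ x = φ y → x = y := by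
    intro x _ y _ h
    have ha : x.1 0 + x.1 1 = y.1 0 + y.1 1 := congrArg (fun w : Tup => w.1) h
    have hb : x.1 0 = y.1 0 := congrArg (fun w : Tup => w.2.1) h
    have hc : x.1 2 = y.1 2 := congrArg (fun w : Tup => w.2.2.1) h
    have hd : x.1 4 = y.1 4 := congrArg (fun w : Tup => w.2.2.2.1) h
    have he : x.1 5 = y.1 5 := congrArg (fun w : Tup => w.2.2.2.2) h
    have hx := x.2; have hy := y.2
    obtain ⟨hxpos, hxsum, hxeq, hxlt⟩ := hx
    obtain ⟨hypos, hysum, hyeq, hylt⟩ := hy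
    have c0 := hb
    have c1 : x.1 1 = y.1 1 := by omega
    have c2 := hc
    have c3 : x.1 3 = y.1 3 := by omega
    have c4 := hd
    have c5 := he
    have c6 : x.1 6 = y.1 6 := by omega
    apply Subtype.ext
    funext i
    fin_cases i
    · exact c0
    · exact c1
    · exact c2
    · exact c3
    · exact c4
    · exact c5
    · exact c6
  have himg : F.image φ ⊆ WW n := by
    intro w hw
    rw [Finset.mem_image] at hw
    obtain ⟨p, _, rfl⟩ := hw
    obtain ⟨hpos, hsum, heqn, hlt⟩ := p.2
    have h0 := hpos 0; have h1 := hpos 1; have h2 := hpos 2; have h3 := hpos 3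
    have h4 := hpos 4; have h5 := hpos 5; have h6 := hpos 6
    simp only [hφ, WW, Finset.mem_sigma, Finset.mem_Ioo]
    omega
  calc ∑ p ∈ F, ∏ i, ((p : Fin 7 → ℕ) i : ℝ) ^ (-5/7 : ℝ)
      = ∑ p ∈ F, FF n (φ p) := Finset.sum_congr rfl (fun p _ => key p)
    _ = ∑ w ∈ F.image φ, FF n w := (Finset.sum_image hinj).symm
    _ ≤ ∑ w ∈ WW n, FF n w :=
        Finset.sum_le_sum_of_subset_of_nonneg himg (fun w _ _ => FF_nonneg n w)
    _ ≤ 130000 := master n (by omega)
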